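/- For n ≥ 1, let B_n be the n × n matrix over the field 𝔽₂ with two elements whose diagonal entries are all 0 and whose off-diagonal entries are all 1. Then the rank of B_n over 𝔽₂ equals n − 1 if n is odd, and equals n if n is even. -/
import Mathlib


/-- The `n × n` matrix over `𝔽₂` with zero diagonal and all off-diagonal entries equal to `1`
has rank `n - 1` if `n` is odd and rank `n` if `n` is even. -/
theorem stmt18 (n : ℕ) (hn : 1 ≤ n) :
    (Matrix.of (fun i j : Fin n => if i = j then (0 : ZMod 2) else 1)).rank
      = if Odd n then n - 1 else n := by
  set B : Matrix (Fin n) (Fin n) (ZMod 2) :=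
    Matrix.of (fun i j : Fin n => if i = j then (0 : ZMod 2) else 1) with hB
  have hmul : ∀ (x : Fin n → ZMod 2) (i : Fin n),
      B.mulVec x i = (∑ j, x j) - x i := by
    intro x i
    have h1 : ∀ j : Fin n, B i j * x j = x j - (if i = j then x j else 0) := by
      intro j
      simp only [hB, Matrix.of_apply]
      split <;> ring
    simp only [Matrix.mulVec, dotProduct]
    rw [Finset.sum_congr rfl (fun j _ => h1 j), Finset.sum_sub_distrib,
      Finset.sum_ite_eq Finset.univ i x, if_pos (Finset.mem_univ i)]
  have hker : ∀ x : Fin n → ZMod 2,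
      x ∈ LinearMap.ker B.mulVecLin ↔ ∀ i, x i = ∑ j, x j := by
    intro x
    rw [LinearMap.mem_ker]
    constructor
    · intro h i
      have := congrFun h i
      rw [Matrix.mulVecLin_apply, hmul, Pi.zero_apply, sub_eq_zero] at this
      exact this.symm
    · intro h
      funext i
      rw [Matrix.mulVecLin_apply, hmul, Pi.zero_apply, ← h i, sub_self]
  have hrn := LinearMap.finrank_range_add_finrank_ker B.mulVecLin
  have hfr : Module.finrank (ZMod 2) (Fin n → ZMod 2) = n := by simp
  rw [hfr] at hrn
  have hrank : B.rank = Module.finrank (ZMod 2) (LinearMap.range B.mulVecLin) := rfl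
  have hsum : ∀ c : ZMod 2, (∑ _j : Fin n, c) = (n : ZMod 2) * c := by
    intro c
    rw [Finset.sum_const, Finset.card_univ, Fintype.card_fin, nsmul_eq_mul]
  by_cases hodd : Odd n
  · have hn2 : (n : ZMod 2) = 1 := by
      rw [← Nat.mod_add_div n 2]
      push_cast
      simp [Nat.odd_iff.mp hodd]
      left; decide
    have hks : LinearMap.ker B.mulVecLin
        = Submodule.span (ZMod 2) {(fun _ => 1 : Fin n → ZMod 2)} := by
      ext x
      rw [hker, Submodule.mem_span_singleton]
      constructor
      · intro h
        refine ⟨∑ j, x j, ?_⟩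
        funext i
        rw [Pi.smul_apply, smul_eq_mul, mul_one, ← h i]
      · intro ⟨c, hc⟩ i
        rw [← hc]
        simp only [Pi.smul_apply, smul_eq_mul, mul_one]
        rw [hsum c, hn2, one_mul]
    have hone : (fun _ => 1 : Fin n → ZMod 2) ≠ 0 := by
      intro h
      have := congrFun h ⟨0, hn⟩
      simp at this
    have hkd : Module.finrank (ZMod 2) (LinearMap.ker B.mulVecLin) = 1 := by
      rw [hks, finrank_span_singleton hone]
    rw [hkd] at hrn
    rw [if_pos hodd, hrank]
    omega
  · have hn2 : (n : ZMod 2) = 0 := by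
      have : n % 2 = 0 := Nat.even_iff.mp (Nat.not_odd_iff_even.mp hodd)
      rw [← Nat.mod_add_div n 2]
      push_cast
      simp [this]
      left; decide
    have hks : LinearMap.ker B.mulVecLin = ⊥ := by
      rw [Submodule.eq_bot_iff]
      intro x hx
      rw [hker] at hx
      funext i
      have hs : (∑ j, x j) = 0 := by
        have : (∑ j, x j) = ∑ j, (∑ k, x k) := Finset.sum_congr rfl (fun j _ => hx j)
        rw [this, hsum, hn2, zero_mul]
      rw [Pi.zero_apply, hx i, hs]
    rw [hks] at hrn
    simp only [finrank_bot, add_zero] at hrn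
    rw [if_neg hodd, hrank, hrn]
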